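/- Let Ω ⊂ ℝⁿ be a convex body and let c ∈ [0,|Ω|]. For p ∈ [1,∞) set σ_p := inf{ J_p(ω) : ω ⊆ Ω nonempty compact convex, |ω| = c } and σ_∞ := inf{ d^H(ω,Ω) : ω ⊆ Ω nonempty compact convex, |ω| = c }. Then σ_p → σ_∞ as p → ∞. -/

import Mathlib

open MeasureTheory Metric Filter Topology
open scoped ENNReal NNReal Pointwise

/-- Support function of a set `ω`, as a function of the direction `θ`. -/
noncomputable def suppFn {n : ℕ} (ω : Set (EuclideanSpace ℝ (Fin n)))
    (θ : EuclideanSpace ℝ (Fin n)) : ℝ :=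
  sSup ((fun y => (inner ℝ θ y : ℝ)) '' ω)

/-- The p-distance functional `J_p`. -/
noncomputable def Jp {n : ℕ} (Ω ω : Set (EuclideanSpace ℝ (Fin n))) (p : ℝ) : ℝ :=
  (∫ θ in sphere (0 : EuclideanSpace ℝ (Fin n)) 1,
      |suppFn Ω θ - suppFn ω θ| ^ p ∂(μH[(n : ℝ) - 1])) ^ (1 / p)

/-- The admissible class: nonempty compact convex subsets of `Ω` of volume `c`. -/
def Kc {n : ℕ} (Ω : Set (EuclideanSpace ℝ (Fin n))) (c : ℝ≥0∞) :
    Set (Set (EuclideanSpace ℝ (Fin n))) :=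
  {ω | ω.Nonempty ∧ IsCompact ω ∧ Convex ℝ ω ∧ ω ⊆ Ω ∧ volume ω = c}

open Module

section Aux

variable {n : ℕ}

local notation "E" => EuclideanSpace ℝ (Fin n)



lemma suppFn_bddAbove {ω : Set E} (hω : IsCompact ω) (θ : E) :
    BddAbove ((fun y => (inner ℝ θ y : ℝ)) '' ω) :=
  (hω.image (continuous_const.inner continuous_id)).bddAbove

lemma le_suppFn {ω : Set E} (hω : IsCompact ω) {θ y : E} (hy : y ∈ ω) :
    (inner ℝ θ y : ℝ) ≤ suppFn ω θ :=
  le_csSup (suppFn_bddAbove hω θ) (Set.mem_image_of_mem _ hy)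

lemma suppFn_le {ω : Set E} (hω : ω.Nonempty) {θ : E} {a : ℝ}
    (h : ∀ y ∈ ω, (inner ℝ θ y : ℝ) ≤ a) : suppFn ω θ ≤ a :=
  csSup_le (hω.image _) (by rintro x ⟨y, hy, rfl⟩; exact h y hy)

lemma suppFn_mono {ω Ω : Set E} (hω : ω.Nonempty) (hΩ : IsCompact Ω) (hsub : ω ⊆ Ω) (θ : E) :
    suppFn ω θ ≤ suppFn Ω θ :=
  suppFn_le hω fun y hy => le_suppFn hΩ (hsub hy)

lemma suppFn_sub_le {ω : Set E} (hne : ω.Nonempty) (hω : IsCompact ω) {R : ℝ}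
    (hR : ω ⊆ closedBall 0 R) (θ θ' : E) :
    suppFn ω θ ≤ suppFn ω θ' + R * ‖θ - θ'‖ := by
  refine suppFn_le hne fun y hy => ?_
  have h1 : (inner ℝ θ y : ℝ) = inner ℝ θ' y + inner ℝ (θ - θ') y := by
    rw [← inner_add_left, add_sub_cancel]
  have h2 : (inner ℝ (θ - θ') y : ℝ) ≤ ‖θ - θ'‖ * ‖y‖ := real_inner_le_norm _ _
  have h3 : ‖y‖ ≤ R := by simpa [dist_eq_norm] using hR hy
  have h4 : ‖θ - θ'‖ * ‖y‖ ≤ R * ‖θ - θ'‖ := by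
    rw [mul_comm]; exact mul_le_mul_of_nonneg_right h3 (norm_nonneg _)
  have := le_suppFn hω hy (θ := θ')
  linarith

lemma suppFn_lipschitzBound {ω : Set E} (hne : ω.Nonempty) (hω : IsCompact ω) {R : ℝ}
    (hR : ω ⊆ closedBall 0 R) (θ θ' : E) :
    |suppFn ω θ - suppFn ω θ'| ≤ R * ‖θ - θ'‖ := by
  rw [abs_sub_le_iff]
  constructor
  · have := suppFn_sub_le hne hω hR θ θ'; linarith
  · have := suppFn_sub_le hne hω hR θ' θ
    rw [norm_sub_rev] at this; linarith

lemma suppFn_diff_nonneg {ω Ω : Set E} (hω : ω.Nonempty) (hΩ : IsCompact Ω) (hsub : ω ⊆ Ω)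
    (θ : E) : 0 ≤ suppFn Ω θ - suppFn ω θ :=
  sub_nonneg.2 (suppFn_mono hω hΩ hsub θ)

lemma suppFn_diff_le_hausdorffDist {ω Ω : Set E} (hωne : ω.Nonempty) (hωc : IsCompact ω)
    (hΩne : Ω.Nonempty) (hΩc : IsCompact Ω) (hsub : ω ⊆ Ω) {θ : E} (hθ : ‖θ‖ = 1) :
    suppFn Ω θ - suppFn ω θ ≤ hausdorffDist ω Ω := by
  have hfin : EMetric.hausdorffEdist Ω ω ≠ ⊤ :=
    hausdorffEdist_ne_top_of_nonempty_of_bounded hΩne hωne hΩc.isBounded hωc.isBounded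
  rw [sub_le_iff_le_add]
  refine suppFn_le hΩne fun x hx => ?_
  obtain ⟨y, hy, hxy⟩ := hωc.exists_infDist_eq_dist hωne x
  have h1 : infDist x ω ≤ hausdorffDist Ω ω := infDist_le_hausdorffDist_of_mem hx hfin
  have h2 : (inner ℝ θ x : ℝ) = inner ℝ θ y + inner ℝ θ (x - y) := by
    rw [← inner_add_right, add_sub_cancel]
  have h3 : (inner ℝ θ (x - y) : ℝ) ≤ ‖θ‖ * ‖x - y‖ := real_inner_le_norm _ _
  have h4 : ‖x - y‖ = dist x y := (dist_eq_norm _ _).symm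
  have h5 : (inner ℝ θ y : ℝ) ≤ suppFn ω θ := le_suppFn hωc hy
  have h6 : hausdorffDist Ω ω = hausdorffDist ω Ω := hausdorffDist_comm
  rw [h2]
  have : (inner ℝ θ (x - y) : ℝ) ≤ dist x y := by rw [← h4] at *; simpa [hθ] using h3
  linarith [hxy ▸ h1]

lemma exists_suppFn_diff_ge {ω Ω : Set E} (hn : 1 ≤ n) (hωne : ω.Nonempty) (hωc : IsCompact ω)
    (hωconv : Convex ℝ ω) (hΩne : Ω.Nonempty) (hΩc : IsCompact Ω) (hsub : ω ⊆ Ω) :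
    ∃ θ ∈ sphere (0 : E) 1, hausdorffDist ω Ω ≤ suppFn Ω θ - suppFn ω θ := by
  -- maximize infDist · ω over Ω
  obtain ⟨x₀, hx₀Ω, hx₀max⟩ := hΩc.exists_isMaxOn hΩne
    ((continuous_infDist_pt ω).continuousOn)
  set t := infDist x₀ ω with ht
  have htnonneg : 0 ≤ t := infDist_nonneg
  have hd : hausdorffDist ω Ω ≤ t := by
    apply hausdorffDist_le_of_infDist htnonneg
    · intro x hx
      have : infDist x Ω = 0 := by
        rw [infDist_zero_of_mem (hsub hx)]
      rw [this]; exact htnonneg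
    · intro y hy; exact hx₀max hy
  rcases eq_or_lt_of_le htnonneg with h0 | hpos
  · -- t = 0
    have hsph : (sphere (0 : E) 1).Nonempty := by
      refine ⟨EuclideanSpace.single ⟨0, hn⟩ 1, ?_⟩
      simp [EuclideanSpace.norm_single]
    obtain ⟨θ, hθ⟩ := hsph
    refine ⟨θ, hθ, le_trans (hd.trans (le_of_eq h0.symm)) ?_⟩
    exact suppFn_diff_nonneg hωne hΩc hsub θ
  · -- t > 0
    obtain ⟨y₀, hy₀, hxy₀⟩ := hωc.exists_infDist_eq_dist hωne x₀
    have hdist : dist x₀ y₀ = t := hxy₀.symm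
    have hvar : ∀ w ∈ ω, (inner ℝ (x₀ - y₀) (w - y₀) : ℝ) ≤ 0 := by
      have key : ‖x₀ - y₀‖ = ⨅ w : ω, ‖x₀ - (w : E)‖ := by
        have h : infDist x₀ ω = ⨅ y : ω, dist x₀ (y : E) := infDist_eq_iInf
        simp only [dist_eq_norm] at h hxy₀
        rw [← hxy₀, h]
      exact (norm_eq_iInf_iff_real_inner_le_zero hωconv hy₀).mp key
    set τ := ‖x₀ - y₀‖ with hτ
    have hτt : τ = t := by rw [hτ, ← dist_eq_norm, hdist]
    have hτpos : 0 < τ := by rw [hτt]; exact hpos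
    set θ : E := τ⁻¹ • (x₀ - y₀) with hθdef
    have hθnorm : ‖θ‖ = 1 := by
      rw [hθdef, norm_smul, norm_inv, Real.norm_eq_abs, abs_of_pos hτpos, ← hτ,
        inv_mul_cancel₀ hτpos.ne']
    refine ⟨θ, by simpa using hθnorm, ?_⟩
    have hsupω : suppFn ω θ ≤ inner ℝ θ y₀ := by
      refine suppFn_le hωne fun w hw => ?_
      have h1 : (inner ℝ θ w : ℝ) - inner ℝ θ y₀ = inner ℝ θ (w - y₀) := by
        rw [inner_sub_right]
      have h2 : (inner ℝ θ (w - y₀) : ℝ) = τ⁻¹ * inner ℝ (x₀ - y₀) (w - y₀) := by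
        rw [hθdef, real_inner_smul_left]
      have h3 := hvar w hw
      nlinarith [inv_pos.2 hτpos]
    have hsupΩ : (inner ℝ θ x₀ : ℝ) ≤ suppFn Ω θ := le_suppFn hΩc hx₀Ω
    have hx₀y₀ : (inner ℝ θ x₀ : ℝ) - inner ℝ θ y₀ = τ := by
      have : (inner ℝ θ x₀ : ℝ) - inner ℝ θ y₀ = inner ℝ θ (x₀ - y₀) := by rw [inner_sub_right]
      rw [this, hθdef, real_inner_smul_left, real_inner_self_eq_norm_sq, ← hτ]
      field_simp
    linarith [hd, hτt]


set_option maxHeartbeats 2000000 in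
lemma cap_measure_lower (hn : 1 ≤ n) {r : ℝ} (hr : 0 < r) :
    ∃ m : ℝ≥0∞, 0 < m ∧ m ≠ ⊤ ∧ ∀ θ₀ ∈ sphere (0 : E) 1,
      m ≤ μH[(n:ℝ)-1] (sphere (0 : E) 1 ∩ ball θ₀ r) := by
  haveI : Fact (finrank ℝ (EuclideanSpace ℝ (Fin n)) = (n - 1) + 1) :=
    ⟨by rw [finrank_euclideanSpace_fin]; omega⟩
  have hd : (0:ℝ) ≤ (n:ℝ) - 1 := by
    have : (1:ℝ) ≤ (n:ℝ) := by exact_mod_cast hn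
    linarith
  have hcast : ((n - 1 : ℕ) : ℝ) = (n : ℝ) - 1 := by
    have : ((n - 1 : ℕ) : ℝ) = (n : ℝ) - 1 := by
      push_cast [Nat.cast_sub hn]; ring
    exact this
  set r' : ℝ := min (r/2) (1/2) with hr'def
  have hr'pos : 0 < r' := lt_min (by linarith) (by norm_num)
  have hr'half : r' ≤ 1/2 := min_le_right _ _
  have hr'r : r' ≤ r/2 := min_le_left _ _
  set m : ℝ≥0∞ := μH[(n:ℝ)-1] (ball (0 : EuclideanSpace ℝ (Fin (n-1))) r') with hm
  have hmeq : (μH[(n:ℝ)-1] : Measure (EuclideanSpace ℝ (Fin (n-1)))) =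
      μH[(finrank ℝ (EuclideanSpace ℝ (Fin (n-1))) : ℝ)] := by
    rw [finrank_euclideanSpace_fin, hcast]
  have hmpos : 0 < m := by
    rw [hm, hmeq]
    exact measure_ball_pos _ _ hr'pos
  have hmtop : m ≠ ⊤ := by
    rw [hm, hmeq]
    exact ((isCompact_closedBall _ _).measure_lt_top.trans_le' (measure_mono ball_subset_closedBall)).ne
  refine ⟨m, hmpos, hmtop, fun θ₀ hθ₀ => ?_⟩
  have he : ‖θ₀‖ = 1 := by simpa using hθ₀
  have hene : θ₀ ≠ 0 := by intro h; rw [h] at he; simp at he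
  set K : Submodule ℝ E := (ℝ ∙ θ₀)ᗮ with hK
  have hKrank : finrank ℝ K = n - 1 := Submodule.finrank_orthogonal_span_singleton hene
  set b : OrthonormalBasis (Fin (n-1)) ℝ K :=
    OrthonormalBasis.fromOrthogonalSpanSingleton (n-1) hene with hb
  -- step 1 : m = μH (ball in K)
  have step1 : m = μH[(n:ℝ)-1] (ball (0 : K) r') := by
    have h1 : (b.repr.symm : EuclideanSpace ℝ (Fin (n-1)) → K) ''
        (ball (0 : EuclideanSpace ℝ (Fin (n-1))) r') = ball (0 : K) r' := by
      ext x
      constructor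
      · rintro ⟨y, hy, rfl⟩
        simp only [mem_ball, dist_zero_right] at hy ⊢
        simpa using hy
      · intro hx
        refine ⟨b.repr x, ?_, by simp⟩
        simp only [mem_ball, dist_zero_right] at hx ⊢
        simpa using hx
    rw [hm, ← h1, b.repr.symm.isometry.hausdorffMeasure_image (Or.inl hd)]
  -- step 2 : μH (ball in K) = μH (coe image in E)
  have step2 : μH[(n:ℝ)-1] (ball (0 : K) r') =
      μH[(n:ℝ)-1] (((↑) : K → E) '' ball (0 : K) r') :=
    (K.subtypeₗᵢ.isometry.hausdorffMeasure_image (Or.inl hd) _).symm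
  -- the orthogonal projection as a map E → E
  set projE : E → E := fun x => ((K.orthogonalProjectionOnto x : K) : E) with hprojE
  have hlip : LipschitzWith 1 projE := by
    refine LipschitzWith.of_dist_le_mul fun x y => ?_
    simp only [hprojE, dist_eq_norm, NNReal.coe_one, one_mul]
    rw [← Submodule.coe_sub, ← map_sub]
    calc ‖((K.orthogonalProjectionOnto (x - y) : K) : E)‖
        = ‖K.orthogonalProjectionOnto (x - y)‖ := rfl
      _ ≤ 1 * ‖x - y‖ := (K.orthogonalProjectionOnto).le_of_opNorm_le (Submodule.orthogonalProjectionOnto_norm_le K) _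
      _ = ‖x - y‖ := one_mul _
  -- geometric inclusion
  have hincl : ((↑) : K → E) '' ball (0 : K) r' ⊆
      projE '' (sphere (0 : E) 1 ∩ ball θ₀ r) := by
    rintro _ ⟨v, hv, rfl⟩
    simp only [mem_ball, dist_zero_right] at hv
    have hvnorm : ‖(v : E)‖ = ‖v‖ := rfl
    have hvhalf : ‖v‖ ≤ 1/2 := le_of_lt (lt_of_lt_of_le hv hr'half)
    have hvsq : (0:ℝ) ≤ 1 - ‖v‖^2 := by nlinarith [norm_nonneg v]
    set t : ℝ := Real.sqrt (1 - ‖v‖^2) with htdef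
    have ht0 : 0 ≤ t := Real.sqrt_nonneg _
    have htsq : t^2 = 1 - ‖v‖^2 := Real.sq_sqrt hvsq
    have ht1 : t ≤ 1 := by nlinarith [norm_nonneg v]
    set θ : E := (v : E) + t • θ₀ with hθdef
    have hinner : (inner ℝ (v : E) θ₀ : ℝ) = 0 :=
      Submodule.mem_orthogonal_singleton_iff_inner_left.mp v.2
    have hnorm2 : ‖θ‖^2 = 1 := by
      rw [hθdef, norm_add_sq_real]
      rw [real_inner_smul_right, hinner, norm_smul, Real.norm_eq_abs, abs_of_nonneg ht0, he]
      simp only [mul_one, mul_zero, add_zero]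
      rw [hvnorm]
      linarith [htsq]
    have hnorm : ‖θ‖ = 1 := by
      have h : ‖θ‖ = Real.sqrt (‖θ‖^2) := (Real.sqrt_sq (norm_nonneg θ)).symm
      rw [h, hnorm2, Real.sqrt_one]
    have hdist : dist θ θ₀ < r := by
      have hsub : θ - θ₀ = (v : E) + (t - 1) • θ₀ := by
        rw [hθdef]; module
      have hd2 : ‖θ - θ₀‖^2 = ‖v‖^2 + (t-1)^2 := by
        rw [hsub, norm_add_sq_real, real_inner_smul_right, hinner, norm_smul,
          Real.norm_eq_abs, he, mul_one, hvnorm]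
        ring_nf
        rw [sq_abs]
        ring
      have hts : t^2 ≤ t := by
        rw [sq]
        calc t * t ≤ t * 1 := mul_le_mul_of_nonneg_left ht1 ht0
          _ = t := mul_one t
      have h1t : 1 - t ≤ ‖v‖^2 := by linarith [htsq]
      have hv2 : ‖v‖^2 < r'^2 := by
        rw [sq, sq]; exact mul_self_lt_mul_self (norm_nonneg _) hv
      have hv21 : ‖v‖^2 ≤ 1 := by
        have h := mul_self_le_mul_self (norm_nonneg v) hvhalf
        rw [← sq] at h; norm_num at h; linarith
      have h4 : (t-1)^2 ≤ ‖v‖^2 * ‖v‖^2 := by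
        have heq : (t-1)^2 = (1-t)*(1-t) := by ring
        rw [heq]
        exact mul_self_le_mul_self (by linarith) h1t
      have h5 : ‖v‖^2 * ‖v‖^2 ≤ ‖v‖^2 := by
        calc ‖v‖^2 * ‖v‖^2 ≤ 1 * ‖v‖^2 :=
              mul_le_mul_of_nonneg_right hv21 (sq_nonneg _)
          _ = ‖v‖^2 := one_mul _
      have hrr : r'^2 ≤ (r/2)^2 := by
        rw [sq, sq]; exact mul_self_le_mul_self hr'pos.le hr'r
      have hr2 : (r/2)^2 = r^2/4 := by ring
      have hrpos2 : (0:ℝ) < r^2 := by positivity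
      have hlt : ‖θ - θ₀‖^2 < r^2 := by linarith [hd2]
      rw [dist_eq_norm]
      have h' : ‖θ - θ₀‖ = Real.sqrt (‖θ - θ₀‖^2) := (Real.sqrt_sq (norm_nonneg _)).symm
      rw [h']
      calc Real.sqrt (‖θ - θ₀‖^2) < Real.sqrt (r^2) := by
            exact Real.sqrt_lt_sqrt (sq_nonneg _) hlt
        _ = r := Real.sqrt_sq hr.le
    refine ⟨θ, ⟨mem_sphere_zero_iff_norm.mpr hnorm, mem_ball.mpr hdist⟩, ?_⟩
    -- projE θ = v
    have hPv : K.orthogonalProjectionOnto ((v : E)) = v :=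
      Submodule.orthogonalProjectionOnto_mem_subspace_eq_self v
    have hPθ₀ : K.orthogonalProjectionOnto θ₀ = 0 := by
      apply Submodule.orthogonalProjectionOnto_apply_of_mem_orthogonal
      rw [hK, Submodule.orthogonal_orthogonal]
      exact Submodule.mem_span_singleton_self θ₀
    show ((K.orthogonalProjectionOnto ((v : E) + t • θ₀) : K) : E) = (v : E)
    rw [map_add, _root_.map_smul, hPv, hPθ₀, smul_zero, add_zero]
  calc m = μH[(n:ℝ)-1] (((↑) : K → E) '' ball (0 : K) r') := by rw [step1, ← step2]
    _ ≤ μH[(n:ℝ)-1] (projE '' (sphere (0 : E) 1 ∩ ball θ₀ r)) := measure_mono hincl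
    _ ≤ (1:ℝ≥0) ^ ((n:ℝ)-1) * μH[(n:ℝ)-1] (sphere (0 : E) 1 ∩ ball θ₀ r) :=
        hlip.hausdorffMeasure_image_le hd _
    _ = μH[(n:ℝ)-1] (sphere (0 : E) 1 ∩ ball θ₀ r) := by
        simp [ENNReal.one_rpow]


set_option maxHeartbeats 2000000 in
lemma piece_finite (hn : 1 ≤ n) {e : E} (he : ‖e‖ = 1) {α : ℝ} (hα : 0 < α) (hα1 : α ≤ 1) :
    μH[(n:ℝ)-1] {θ : E | θ ∈ sphere (0 : E) 1 ∧ α ≤ (inner ℝ e θ : ℝ)} < ⊤ := by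
  haveI : Fact (finrank ℝ (EuclideanSpace ℝ (Fin n)) = (n - 1) + 1) :=
    ⟨by rw [finrank_euclideanSpace_fin]; omega⟩
  have hd : (0:ℝ) ≤ (n:ℝ) - 1 := by
    have : (1:ℝ) ≤ (n:ℝ) := by exact_mod_cast hn
    linarith
  have hcast : ((n - 1 : ℕ) : ℝ) = (n : ℝ) - 1 := by
    push_cast [Nat.cast_sub hn]; ring
  have hene : e ≠ 0 := by intro h; rw [h] at he; simp at he
  set K : Submodule ℝ E := (ℝ ∙ e)ᗮ with hK
  have hKrank : finrank ℝ K = n - 1 := Submodule.finrank_orthogonal_span_singleton hene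
  set g : E → ℝ := fun x => Real.sqrt (1 - ‖x‖^2) with hg
  set F : E → E := fun x => x + g x • e with hF
  set A : Set E := {x | (inner ℝ e x : ℝ) = 0 ∧ ‖x‖^2 ≤ 1 - α^2} with hA
  -- facts on A
  have hgA : ∀ x ∈ A, α ≤ g x ∧ g x ^ 2 = 1 - ‖x‖^2 ∧ ‖x‖ ≤ 1 := by
    intro x hx
    obtain ⟨-, hx2⟩ := hx
    have hαsq : α^2 ≤ 1 - ‖x‖^2 := by nlinarith
    have h0 : 0 ≤ 1 - ‖x‖^2 := by nlinarith
    refine ⟨?_, Real.sq_sqrt h0, ?_⟩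
    · rw [hg]
      exact (Real.le_sqrt hα.le h0).mpr hαsq
    · nlinarith [norm_nonneg x]
  -- inclusion
  have hincl : {θ : E | θ ∈ sphere (0 : E) 1 ∧ α ≤ (inner ℝ e θ : ℝ)} ⊆ F '' A := by
    rintro θ ⟨hθs, hθα⟩
    have hθn : ‖θ‖ = 1 := by simpa using hθs
    set s : ℝ := (inner ℝ e θ : ℝ) with hs
    have hs1 : s ≤ 1 := by
      have := real_inner_le_norm e θ
      rw [he, hθn] at this; simpa using this
    have hs0 : 0 < s := lt_of_lt_of_le hα hθα
    set x : E := θ - s • e with hx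
    have hxin : (inner ℝ e x : ℝ) = 0 := by
      rw [hx, inner_sub_right, real_inner_smul_right, real_inner_self_eq_norm_sq, he]
      ring
    have hxn : ‖x‖^2 = 1 - s^2 := by
      rw [hx, norm_sub_sq_real, real_inner_smul_right, norm_smul, Real.norm_eq_abs,
        abs_of_pos hs0, he, real_inner_comm]
      rw [← hs, hθn]
      ring
    have hxA : x ∈ A := by
      refine ⟨hxin, ?_⟩
      rw [hxn]
      have : α^2 ≤ s^2 := by
        rw [sq, sq]; exact mul_self_le_mul_self hα.le hθα
      linarith
    refine ⟨x, hxA, ?_⟩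
    have hgx : g x = s := by
      rw [hg]
      simp only
      rw [hxn]
      have : 1 - (1 - s^2) = s^2 := by ring
      rw [this, Real.sqrt_sq hs0.le]
    rw [hF]
    simp only
    rw [hgx, hx]
    abel
  -- Lipschitz on A
  set c : ℝ≥0 := ⟨1 + α⁻¹, by positivity⟩ with hc
  have hlip : LipschitzOnWith c F A := by
    refine LipschitzOnWith.of_dist_le_mul fun x hx y hy => ?_
    obtain ⟨hgx, hgx2, hnx⟩ := hgA x hx
    obtain ⟨hgy, hgy2, hny⟩ := hgA y hy
    have hkey : (g x - g y) * (g x + g y) = ‖y‖^2 - ‖x‖^2 := by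
      have : (g x - g y) * (g x + g y) = g x ^2 - g y ^2 := by ring
      rw [this, hgx2, hgy2]; ring
    have habs1 : |‖y‖ - ‖x‖| ≤ ‖x - y‖ := by
      rw [norm_sub_rev]; exact abs_norm_sub_norm_le y x
    have habs2 : |‖y‖^2 - ‖x‖^2| ≤ 2 * ‖x - y‖ := by
      have heq : ‖y‖^2 - ‖x‖^2 = (‖y‖ - ‖x‖) * (‖y‖ + ‖x‖) := by ring
      rw [heq, abs_mul, abs_of_nonneg (by positivity : (0:ℝ) ≤ ‖y‖ + ‖x‖)]
      calc |‖y‖ - ‖x‖| * (‖y‖ + ‖x‖) ≤ ‖x - y‖ * 2 := by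
            apply mul_le_mul habs1 (by linarith) (by positivity) (norm_nonneg _)
        _ = 2 * ‖x - y‖ := by ring
    have hsum : 2 * α ≤ g x + g y := by linarith
    have hgdiff : |g x - g y| ≤ α⁻¹ * ‖x - y‖ := by
      have h1 : |g x - g y| * (2 * α) ≤ |g x - g y| * (g x + g y) :=
        mul_le_mul_of_nonneg_left hsum (abs_nonneg _)
      have h2 : |g x - g y| * (g x + g y) = |‖y‖^2 - ‖x‖^2| := by
        rw [← abs_of_nonneg (by linarith : (0:ℝ) ≤ g x + g y), ← abs_mul, hkey]
      have h3 : |g x - g y| * (2 * α) ≤ 2 * ‖x - y‖ := le_trans (h1.trans_eq h2) habs2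
      have h4 : |g x - g y| ≤ (2 * ‖x - y‖) / (2 * α) := by
        rw [le_div_iff₀ (by positivity : (0:ℝ) < 2*α)]
        exact h3
      calc |g x - g y| ≤ (2 * ‖x - y‖) / (2 * α) := h4
        _ = α⁻¹ * ‖x - y‖ := by field_simp
    have hFd : dist (F x) (F y) ≤ (1 + α⁻¹) * dist x y := by
      rw [dist_eq_norm, dist_eq_norm, hF]
      simp only
      have heq : x + g x • e - (y + g y • e) = (x - y) + (g x - g y) • e := by module
      rw [heq]
      calc ‖(x - y) + (g x - g y) • e‖ ≤ ‖x - y‖ + ‖(g x - g y) • e‖ := norm_add_le _ _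
        _ = ‖x - y‖ + |g x - g y| := by rw [norm_smul, Real.norm_eq_abs, he, mul_one]
        _ ≤ ‖x - y‖ + α⁻¹ * ‖x - y‖ := by linarith
        _ = (1 + α⁻¹) * ‖x - y‖ := by ring
    exact hFd
  -- A as image from K
  set Abar : Set K := {v : K | ‖(v : E)‖^2 ≤ 1 - α^2} with hAbar
  have hAeq : A = ((↑) : K → E) '' Abar := by
    ext x
    constructor
    · rintro ⟨h1, h2⟩
      have hxK : x ∈ K := Submodule.mem_orthogonal_singleton_iff_inner_right.mpr h1
      exact ⟨⟨x, hxK⟩, h2, rfl⟩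
    · rintro ⟨v, hv, rfl⟩
      refine ⟨Submodule.mem_orthogonal_singleton_iff_inner_right.mp v.2, hv⟩
  have hAbarcomp : IsCompact Abar := by
    apply Metric.isCompact_of_isClosed_isBounded
    · exact isClosed_le (by continuity) continuous_const
    · apply Bornology.IsBounded.subset (Metric.isBounded_closedBall (x := (0:K)) (r := 1))
      intro v hv
      simp only [Metric.mem_closedBall, dist_zero_right]
      have : ‖(v:E)‖^2 ≤ 1 - α^2 := hv
      have hn1 : ‖(v:E)‖ = ‖v‖ := rfl
      nlinarith [norm_nonneg v]
  have hAfin : μH[(n:ℝ)-1] A < ⊤ := by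
    have himg : μH[(n:ℝ)-1] (Subtype.val '' Abar : Set E) = μH[(n:ℝ)-1] Abar :=
      K.subtypeₗᵢ.isometry.hausdorffMeasure_image (Or.inl hd) Abar
    have hmeq : (μH[(n:ℝ)-1] : Measure K) = μH[(finrank ℝ K : ℝ)] := by
      rw [hKrank, hcast]
    rw [hAeq, himg, hmeq]
    exact hAbarcomp.measure_lt_top
  calc μH[(n:ℝ)-1] {θ : E | θ ∈ sphere (0 : E) 1 ∧ α ≤ (inner ℝ e θ : ℝ)}
      ≤ μH[(n:ℝ)-1] (F '' A) := measure_mono hincl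
    _ ≤ (c : ℝ≥0∞) ^ ((n:ℝ)-1) * μH[(n:ℝ)-1] A := hlip.hausdorffMeasure_image_le hd
    _ < ⊤ := ENNReal.mul_lt_top (ENNReal.rpow_lt_top_of_nonneg hd ENNReal.coe_ne_top) hAfin

lemma sphere_measure_lt_top : μH[(n:ℝ)-1] (sphere (0 : E) 1) < ⊤ := by
  rcases Nat.eq_zero_or_pos n with hn0 | hn
  · subst hn0
    have : (sphere (0 : EuclideanSpace ℝ (Fin 0)) 1) = ∅ := by
      ext x
      simp only [mem_sphere, Set.mem_empty_iff_false, iff_false]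
      have : x = 0 := Subsingleton.elim x 0
      rw [this]
      simp
    rw [this, measure_empty]
    exact ENNReal.zero_lt_top
  · set α : ℝ := (Real.sqrt n)⁻¹ with hα
    have hnpos : (0:ℝ) < n := by exact_mod_cast hn
    have hsq : (0:ℝ) < Real.sqrt n := Real.sqrt_pos.mpr hnpos
    have hαpos : 0 < α := inv_pos.mpr hsq
    have hα1 : α ≤ 1 := by
      rw [hα]
      have h1 : (1:ℝ) ≤ Real.sqrt n := by
        rw [show (1:ℝ) = Real.sqrt 1 by rw [Real.sqrt_one]]
        exact Real.sqrt_le_sqrt (by exact_mod_cast hn)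
      calc (Real.sqrt n)⁻¹ ≤ 1⁻¹ := by
            apply inv_anti₀ one_pos h1
        _ = 1 := inv_one
    -- covering
    have hcover : sphere (0 : E) 1 ⊆
        ⋃ i : Fin n, ({θ : E | θ ∈ sphere (0 : E) 1 ∧ α ≤ (inner ℝ (EuclideanSpace.single i 1) θ : ℝ)}
          ∪ {θ : E | θ ∈ sphere (0 : E) 1 ∧ α ≤ (inner ℝ (-EuclideanSpace.single i 1) θ : ℝ)}) := by
      intro θ hθ
      have hθn : ‖θ‖ = 1 := by simpa using hθ
      have hsum : ∑ i, (θ i)^2 = 1 := by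
        have := EuclideanSpace.norm_eq θ
        rw [hθn] at this
        have hnn : 0 ≤ ∑ i, ‖θ i‖^2 := Finset.sum_nonneg fun i _ => sq_nonneg _
        have h3 : (∑ i, ‖θ i‖^2) = 1 := by
          rw [← Real.sq_sqrt hnn, ← this]; norm_num
        simpa [Real.norm_eq_abs, sq_abs] using h3
      have hex : ∃ i, α ≤ |θ i| := by
        by_contra hcon
        push_neg at hcon
        have hlt : ∀ i, (θ i)^2 < α^2 := by
          intro i
          have h := hcon i
          have : |θ i|^2 < α^2 := by
            rw [sq, sq]
            exact mul_self_lt_mul_self (abs_nonneg _) h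
          simpa [sq_abs] using this
        have hαsq : α^2 = 1/n := by
          rw [hα, sq, ← mul_inv, Real.mul_self_sqrt hnpos.le, one_div]
        have : (1:ℝ) < 1 := by
          calc (1:ℝ) = ∑ i, (θ i)^2 := hsum.symm
            _ < ∑ _i : Fin n, α^2 := by
                apply Finset.sum_lt_sum_of_nonempty
                · exact Finset.univ_nonempty_iff.mpr (Fin.pos_iff_nonempty.mp hn)
                · intro i _; exact hlt i
            _ = n * α^2 := by rw [Finset.sum_const, Finset.card_univ, Fintype.card_fin]; ring
            _ = 1 := by rw [hαsq]; field_simp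
        exact lt_irrefl 1 this
      obtain ⟨i, hi⟩ := hex
      have hip : (inner ℝ (EuclideanSpace.single i (1:ℝ)) θ : ℝ) = θ i := by
        rw [EuclideanSpace.inner_single_left]
        simp
      apply Set.mem_iUnion.mpr
      refine ⟨i, ?_⟩
      rcases abs_cases (θ i) with ⟨habs, -⟩ | ⟨habs, -⟩
      · left; exact ⟨hθ, by rw [hip, ← habs]; exact hi⟩
      · right
        refine ⟨hθ, ?_⟩
        rw [inner_neg_left, hip]
        rw [habs] at hi
        linarith
    calc μH[(n:ℝ)-1] (sphere (0 : E) 1)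
        ≤ ∑ i : Fin n, μH[(n:ℝ)-1]
          ({θ : E | θ ∈ sphere (0 : E) 1 ∧ α ≤ (inner ℝ (EuclideanSpace.single i 1) θ : ℝ)}
          ∪ {θ : E | θ ∈ sphere (0 : E) 1 ∧ α ≤ (inner ℝ (-EuclideanSpace.single i 1) θ : ℝ)}) := by
          exact (measure_mono hcover).trans (measure_iUnion_fintype_le _ _)
      _ < ⊤ := by
          apply ENNReal.sum_lt_top.mpr
          intro i _
          apply lt_of_le_of_lt (measure_union_le _ _)
          apply ENNReal.add_lt_top.mpr
          constructor
          · exact piece_finite hn (by simp [EuclideanSpace.norm_single]) hαpos hα1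
          · exact piece_finite hn (by simp [EuclideanSpace.norm_single]) hαpos hα1


lemma Jp_nonneg (Ω ω : Set E) (p : ℝ) : 0 ≤ Jp Ω ω p :=
  Real.rpow_nonneg (integral_nonneg fun _ => Real.rpow_nonneg (abs_nonneg _) _) _

lemma tendsto_rpow_one_div {B : ℝ} (hB : 0 < B) :
    Tendsto (fun p : ℝ => B ^ (1/p)) atTop (𝓝 1) := by
  have h : Tendsto (fun p : ℝ => 1/p) atTop (𝓝 0) := by
    simpa [one_div] using (tendsto_inv_atTop_zero : Tendsto (fun r : ℝ => r⁻¹) atTop (𝓝 0))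
  have hcont : ContinuousAt (fun y : ℝ => B ^ y) 0 := Real.continuousAt_const_rpow hB.ne'
  have := hcont.tendsto.comp h
  simpa [Real.rpow_zero, Function.comp_def] using this

lemma suppFn_continuous {ω : Set E} (hne : ω.Nonempty) (hω : IsCompact ω) :
    Continuous (suppFn ω) := by
  obtain ⟨R, hR⟩ := hω.isBounded.subset_closedBall 0
  have hR0 : 0 ≤ R := by
    obtain ⟨y, hy⟩ := hne
    exact le_trans (norm_nonneg y) (by simpa using hR hy)
  refine LipschitzWith.continuous (K := R.toNNReal) (LipschitzWith.of_dist_le_mul fun θ θ' => ?_)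
  rw [Real.dist_eq, dist_eq_norm, Real.coe_toNNReal _ hR0]
  exact suppFn_lipschitzBound hne hω hR θ θ'

lemma integrableOn_suppFn_pow {Ω ω : Set E} (hωne : ω.Nonempty) (hωc : IsCompact ω)
    (hΩne : Ω.Nonempty) (hΩc : IsCompact Ω) (hsub : ω ⊆ Ω) {p : ℝ} (hp : 1 ≤ p) :
    IntegrableOn (fun θ => |suppFn Ω θ - suppFn ω θ| ^ p) (sphere (0:E) 1) μH[(n:ℝ)-1] := by
  haveI hfin : IsFiniteMeasure ((μH[(n:ℝ)-1] : Measure E).restrict (sphere 0 1)) :=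
    ⟨by rw [Measure.restrict_apply_univ]; exact sphere_measure_lt_top⟩
  have hT0 : (0:ℝ) ≤ hausdorffDist ω Ω := hausdorffDist_nonneg
  have hcont : Continuous (fun θ : E => |suppFn Ω θ - suppFn ω θ| ^ p) := by
    apply Continuous.rpow_const
    · exact ((suppFn_continuous hΩne hΩc).sub (suppFn_continuous hωne hωc)).abs
    · intro x; right; linarith
  apply Integrable.mono' (integrable_const ((hausdorffDist ω Ω) ^ p))
    hcont.aestronglyMeasurable
  refine (ae_restrict_iff' isClosed_sphere.measurableSet).mpr (ae_of_all _ fun θ hθ => ?_)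
  rw [Real.norm_eq_abs, abs_of_nonneg (Real.rpow_nonneg (abs_nonneg _) _)]
  apply Real.rpow_le_rpow (abs_nonneg _) _ (by linarith : (0:ℝ) ≤ p)
  have h1 := suppFn_diff_nonneg hωne hΩc hsub θ
  have h2 := suppFn_diff_le_hausdorffDist hωne hωc hΩne hΩc hsub
    (show ‖θ‖ = 1 by simpa using hθ)
  rw [abs_of_nonneg h1]
  exact h2

lemma Jp_le_bound {Ω ω : Set E} (hωne : ω.Nonempty) (hωc : IsCompact ω)
    (hΩne : Ω.Nonempty) (hΩc : IsCompact Ω) (hsub : ω ⊆ Ω) {p : ℝ} (hp : 1 ≤ p) :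
    Jp Ω ω p ≤ hausdorffDist ω Ω *
      (max 1 (μH[(n:ℝ)-1] (sphere (0:E) 1)).toReal) ^ (1/p) := by
  have hp0 : (0:ℝ) < p := lt_of_lt_of_le one_pos hp
  set T := hausdorffDist ω Ω with hTdef
  have hT0 : 0 ≤ T := hausdorffDist_nonneg
  set A := (μH[(n:ℝ)-1] (sphere (0:E) 1)).toReal with hAdef
  set B := max 1 A with hBdef
  have hA0 : 0 ≤ A := ENNReal.toReal_nonneg
  have hB0 : (0:ℝ) ≤ B := le_trans zero_le_one (le_max_left _ _)
  haveI hfin : IsFiniteMeasure ((μH[(n:ℝ)-1] : Measure E).restrict (sphere 0 1)) :=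
    ⟨by rw [Measure.restrict_apply_univ]; exact sphere_measure_lt_top⟩
  set I := ∫ θ in sphere (0:E) 1, |suppFn Ω θ - suppFn ω θ| ^ p ∂μH[(n:ℝ)-1] with hIdef
  have hI0 : 0 ≤ I := integral_nonneg fun θ => Real.rpow_nonneg (abs_nonneg _) _
  have hIle : I ≤ T ^ p * B := by
    have hb : ∀ᵐ θ ∂((μH[(n:ℝ)-1] : Measure E).restrict (sphere 0 1)),
        ‖|suppFn Ω θ - suppFn ω θ| ^ p‖ ≤ T ^ p := by
      refine (ae_restrict_iff' isClosed_sphere.measurableSet).mpr (ae_of_all _ fun θ hθ => ?_)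
      rw [Real.norm_eq_abs, abs_of_nonneg (Real.rpow_nonneg (abs_nonneg _) _)]
      apply Real.rpow_le_rpow (abs_nonneg _) _ hp0.le
      have h1 := suppFn_diff_nonneg hωne hΩc hsub θ
      have h2 := suppFn_diff_le_hausdorffDist hωne hωc hΩne hΩc hsub
        (show ‖θ‖ = 1 by simpa using hθ)
      rw [abs_of_nonneg h1]; exact h2
    have h3 := norm_integral_le_of_norm_le_const hb
    rw [Real.norm_eq_abs, abs_of_nonneg hI0] at h3
    rw [Measure.real, Measure.restrict_apply_univ] at h3
    calc I ≤ T ^ p * A := h3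
      _ ≤ T ^ p * B := mul_le_mul_of_nonneg_left (le_max_right _ _) (Real.rpow_nonneg hT0 _)
  have hmono := Real.rpow_le_rpow hI0 hIle (one_div_nonneg.mpr hp0.le)
  have heq : (T ^ p * B) ^ (1/p) = T * B ^ (1/p) := by
    rw [Real.mul_rpow (Real.rpow_nonneg hT0 _) hB0, ← Real.rpow_mul hT0,
      mul_one_div_cancel hp0.ne', Real.rpow_one]
  calc Jp Ω ω p = I ^ (1/p) := rfl
    _ ≤ (T ^ p * B) ^ (1/p) := hmono
    _ = T * B ^ (1/p) := heq

lemma bound_le_Jp (hn : 1 ≤ n) {Ω ω : Set E} (hωne : ω.Nonempty) (hωc : IsCompact ω)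
    (hωconv : Convex ℝ ω) (hΩne : Ω.Nonempty) (hΩc : IsCompact Ω) (hsub : ω ⊆ Ω)
    {R : ℝ} (hR1 : 1 ≤ R) (hΩR : Ω ⊆ closedBall 0 R)
    {τ ε' : ℝ} (hτ0 : 0 ≤ τ) (hε' : 0 < ε') (hτT : τ + ε' ≤ hausdorffDist ω Ω)
    {m : ℝ≥0∞} (hm0 : 0 < m) (hmtop : m ≠ ⊤)
    (hm : ∀ θ₀ ∈ sphere (0:E) 1, m ≤ μH[(n:ℝ)-1] (sphere (0:E) 1 ∩ ball θ₀ (ε'/(2*R))))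
    {p : ℝ} (hp : 1 ≤ p) :
    τ * m.toReal ^ (1/p) ≤ Jp Ω ω p := by
  have hp0 : (0:ℝ) < p := lt_of_lt_of_le one_pos hp
  have hR0 : (0:ℝ) < R := lt_of_lt_of_le one_pos hR1
  have hωR : ω ⊆ closedBall 0 R := hsub.trans hΩR
  set r := ε'/(2*R) with hrdef
  have hr0 : 0 < r := div_pos hε' (by linarith)
  obtain ⟨θ₁, hθ₁S, hθ₁⟩ := exists_suppFn_diff_ge hn hωne hωc hωconv hΩne hΩc hsub
  set cap := sphere (0:E) 1 ∩ ball θ₁ r with hcapdef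
  have hcapb : ∀ θ ∈ cap, τ ≤ |suppFn Ω θ - suppFn ω θ| := by
    rintro θ ⟨hθS, hθb⟩
    have hdist : ‖θ - θ₁‖ < r := by rwa [mem_ball, dist_eq_norm] at hθb
    have l1 := abs_sub_le_iff.mp (suppFn_lipschitzBound hΩne hΩc hΩR θ θ₁)
    have l2 := abs_sub_le_iff.mp (suppFn_lipschitzBound hωne hωc hωR θ θ₁)
    have h2Rr : 2 * (R * r) = ε' := by
      rw [hrdef]
      field_simp
    have hnn : 0 ≤ ‖θ - θ₁‖ := norm_nonneg _
    have hRr : R * ‖θ - θ₁‖ ≤ R * r := mul_le_mul_of_nonneg_left hdist.le hR0.le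
    have : τ ≤ suppFn Ω θ - suppFn ω θ := by
      obtain ⟨l1a, l1b⟩ := l1
      obtain ⟨l2a, l2b⟩ := l2
      linarith
    exact this.trans (le_abs_self _)
  have hInt := integrableOn_suppFn_pow hωne hωc hΩne hΩc hsub hp
  have hcapS : cap ⊆ sphere (0:E) 1 := Set.inter_subset_left
  have hcapmeas : MeasurableSet cap :=
    isClosed_sphere.measurableSet.inter measurableSet_ball
  have hcapfin : μH[(n:ℝ)-1] cap ≠ ⊤ :=
    (lt_of_le_of_lt (measure_mono hcapS) sphere_measure_lt_top).ne
  set I := ∫ θ in sphere (0:E) 1, |suppFn Ω θ - suppFn ω θ| ^ p ∂μH[(n:ℝ)-1] with hIdef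
  have hstep1 : τ ^ p * (μH[(n:ℝ)-1] cap).toReal ≤
      ∫ θ in cap, |suppFn Ω θ - suppFn ω θ| ^ p ∂μH[(n:ℝ)-1] := by
    rw [mul_comm]; apply setIntegral_ge_of_const_le hcapmeas hcapfin
    · intro θ hθ
      exact Real.rpow_le_rpow hτ0 (hcapb θ hθ) hp0.le
    · exact hInt.mono_set hcapS
  have hstep2 : ∫ θ in cap, |suppFn Ω θ - suppFn ω θ| ^ p ∂μH[(n:ℝ)-1] ≤ I := by
    apply setIntegral_mono_set hInt
    · exact ae_of_all _ fun θ => Real.rpow_nonneg (abs_nonneg _) _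
    · exact HasSubset.Subset.eventuallyLE hcapS
  have hm' : m.toReal ≤ (μH[(n:ℝ)-1] cap).toReal :=
    ENNReal.toReal_mono hcapfin (hm θ₁ hθ₁S)
  have hτp : (0:ℝ) ≤ τ ^ p := Real.rpow_nonneg hτ0 _
  have hchain : τ ^ p * m.toReal ≤ I :=
    le_trans (le_trans (mul_le_mul_of_nonneg_left hm' hτp) hstep1) hstep2
  have hLHS0 : 0 ≤ τ ^ p * m.toReal := mul_nonneg hτp ENNReal.toReal_nonneg
  have hmono := Real.rpow_le_rpow hLHS0 hchain (one_div_nonneg.mpr hp0.le)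
  have heq : (τ ^ p * m.toReal) ^ (1/p) = τ * m.toReal ^ (1/p) := by
    rw [Real.mul_rpow hτp ENNReal.toReal_nonneg, ← Real.rpow_mul hτ0,
      mul_one_div_cancel hp0.ne', Real.rpow_one]
  calc τ * m.toReal ^ (1/p) = (τ ^ p * m.toReal) ^ (1/p) := heq.symm
    _ ≤ I ^ (1/p) := hmono
    _ = Jp Ω ω p := rfl

end Aux

/-- The values `σ_p` of the approximated problems converge, as `p → ∞`, to the value
`σ_∞` of the Hausdorff-distance problem. -/
theorem sigma_p_tendsto_sigma_infty {n : ℕ} (Ω : Set (EuclideanSpace ℝ (Fin n)))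
    (hΩcomp : IsCompact Ω) (hΩconv : Convex ℝ Ω) (hΩint : (interior Ω).Nonempty)
    (c : ℝ≥0∞) (hc : c ≤ volume Ω) :
    Tendsto (fun p : ℝ => sInf ((fun ω => Jp Ω ω p) '' Kc Ω c)) atTop
      (𝓝 (sInf ((fun ω => hausdorffDist ω Ω) '' Kc Ω c))) := by
  classical
  rcases Set.eq_empty_or_nonempty (Kc Ω c) with hK | hK
  · simp only [hK, Set.image_empty, Real.sInf_empty]
    exact tendsto_const_nhds
  · set σ := sInf ((fun ω => hausdorffDist ω Ω) '' Kc Ω c) with hσdef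
    obtain ⟨ω₁, hω₁⟩ := hK
    have hK : (Kc Ω c).Nonempty := ⟨ω₁, hω₁⟩
    have hΩne : Ω.Nonempty := hΩint.mono interior_subset
    have hdistnn : ∀ s ∈ ((fun ω => hausdorffDist ω Ω) '' Kc Ω c), (0:ℝ) ≤ s := by
      rintro _ ⟨ω, hω, rfl⟩; exact hausdorffDist_nonneg
    have hbddH : BddBelow ((fun ω => hausdorffDist ω Ω) '' Kc Ω c) := ⟨0, hdistnn⟩
    have hσ0 : 0 ≤ σ := le_csInf (hK.image _) hdistnn
    have hJnn : ∀ p : ℝ, ∀ s ∈ ((fun ω => Jp Ω ω p) '' Kc Ω c), (0:ℝ) ≤ s := by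
      rintro p _ ⟨ω, hω, rfl⟩; exact Jp_nonneg Ω ω p
    have hbddJ : ∀ p : ℝ, BddBelow ((fun ω => Jp Ω ω p) '' Kc Ω c) := fun p => ⟨0, hJnn p⟩
    have hσleT : ∀ ω ∈ Kc Ω c, σ ≤ hausdorffDist ω Ω := fun ω hω =>
      csInf_le hbddH ⟨ω, hω, rfl⟩
    obtain ⟨R₀, hR₀⟩ := hΩcomp.isBounded.subset_closedBall 0
    set R := max R₀ 1 with hRdef
    have hR1 : 1 ≤ R := le_max_right _ _
    have hΩR : Ω ⊆ closedBall 0 R := hR₀.trans (closedBall_subset_closedBall (le_max_left _ _))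
    set B := max 1 (μH[(n:ℝ)-1] (sphere (0 : EuclideanSpace ℝ (Fin n)) 1)).toReal with hBdef
    have hB0 : (0:ℝ) < B := lt_of_lt_of_le one_pos (le_max_left _ _)
    rw [Metric.tendsto_nhds]
    intro ε hε
    have hup : ∀ᶠ p in atTop, sInf ((fun ω => Jp Ω ω p) '' Kc Ω c) < σ + ε := by
      obtain ⟨a, ⟨ω₀, hω₀, rfl⟩, hlt⟩ := Real.lt_sInf_add_pos (hK.image _) (half_pos hε)
      have hlt' : hausdorffDist ω₀ Ω < σ + ε/2 := by rw [hσdef]; exact hlt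
      have h1 : ∀ᶠ p in atTop, Jp Ω ω₀ p ≤ hausdorffDist ω₀ Ω * B ^ (1/p) :=
        (eventually_ge_atTop 1).mono fun p hp =>
          Jp_le_bound hω₀.1 hω₀.2.1 hΩne hΩcomp hω₀.2.2.2.1 hp
      have h2 : Tendsto (fun p : ℝ => hausdorffDist ω₀ Ω * B ^ (1/p)) atTop
          (𝓝 (hausdorffDist ω₀ Ω * 1)) :=
        tendsto_const_nhds.mul (tendsto_rpow_one_div hB0)
      have h3 : hausdorffDist ω₀ Ω * 1 < σ + ε := by rw [mul_one]; linarith [hlt']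
      filter_upwards [h1, h2.eventually_lt_const h3] with p hp1 hp2
      exact lt_of_le_of_lt ((csInf_le (hbddJ p) ⟨ω₀, hω₀, rfl⟩).trans hp1) hp2
    have hlo : ∀ᶠ p in atTop, σ - ε < sInf ((fun ω => Jp Ω ω p) '' Kc Ω c) := by
      rcases eq_or_lt_of_le hσ0 with hσe | hσpos
      · refine Eventually.of_forall fun p => ?_
        have h0 : 0 ≤ sInf ((fun ω => Jp Ω ω p) '' Kc Ω c) := le_csInf (hK.image _) (hJnn p)
        rw [← hσe]; linarith
      · have hn : 1 ≤ n := by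
          by_contra hcon
          have hn0 : n = 0 := by omega
          subst hn0
          have hωeq : ω₁ = Ω := by
            apply Set.Subset.antisymm hω₁.2.2.2.1
            intro x hx
            obtain ⟨y, hy⟩ := hω₁.1
            have : x = y := Subsingleton.elim x y
            rwa [this]
          have hzero : hausdorffDist ω₁ Ω = 0 := by rw [hωeq, hausdorffDist_self_zero]
          have : σ ≤ 0 := (hσleT ω₁ hω₁).trans (le_of_eq hzero)
          linarith
        set ε' := min (ε/2) (σ/2) with hε'def
        have hε'pos : 0 < ε' := lt_min (half_pos hε) (half_pos hσpos)
        set τ := σ - ε' with hτdef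
        have hτ0 : 0 ≤ τ := by
          have := min_le_right (ε/2) (σ/2)
          rw [hτdef]; rw [hε'def]; linarith
        have hrpos : 0 < ε'/(2*R) := div_pos hε'pos (by linarith)
        obtain ⟨m, hm0, hmtop, hm⟩ := cap_measure_lower hn hrpos
        have hmr0 : 0 < m.toReal := ENNReal.toReal_pos hm0.ne' hmtop
        have h1 : ∀ᶠ p in atTop, ∀ ω ∈ Kc Ω c, τ * m.toReal ^ (1/p) ≤ Jp Ω ω p :=
          (eventually_ge_atTop 1).mono fun p hp ω hω =>
            bound_le_Jp hn hω.1 hω.2.1 hω.2.2.1 hΩne hΩcomp hω.2.2.2.1 hR1 hΩR hτ0 hε'pos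
              (by rw [hτdef]; have := hσleT ω hω; linarith) hm0 hmtop hm hp
        have h2 : Tendsto (fun p : ℝ => τ * m.toReal ^ (1/p)) atTop (𝓝 (τ * 1)) :=
          tendsto_const_nhds.mul (tendsto_rpow_one_div hmr0)
        have h3 : σ - ε < τ * 1 := by
          rw [mul_one, hτdef]
          have := min_le_left (ε/2) (σ/2)
          rw [hε'def]; linarith
        filter_upwards [h1, h2.eventually_const_lt h3] with p hp1 hp2
        refine lt_of_lt_of_le hp2 (le_csInf (hK.image _) ?_)
        rintro _ ⟨ω, hω, rfl⟩
        exact hp1 ω hω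
    filter_upwards [hup, hlo] with p h1 h2
    rw [Real.dist_eq, abs_sub_lt_iff]
    constructor <;> linarith
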